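/- (Proposition 3) Fix L ≥ 1 and for each layer ℓ = 1, …, L a continuous linear map W_ℓ : EuclideanSpace ℝ (Fin n_{ℓ−1}) →L[ℝ] EuclideanSpace ℝ (Fin n_ℓ). Let D^{(1)}, …, D^{(L)} be random mask vectors on a probability space, D^{(ℓ)} taking values in [0,1]^{n_ℓ}, independent across layers, with each coordinate square-integrable. Define for each layer the random contraction factor X_ℓ = max_i D^{(ℓ)}_i and μ_ℓ = √(E[X_ℓ²]) ∈ [0,1]. Then the expected product of masked layer operator norms satisfies E[∏_{ℓ=1}^L ‖Diag(D^{(ℓ)}) ∘ W_ℓ‖] ≤ (∏_{ℓ=1}^L μ_ℓ) · ∏_{ℓ=1}^L ‖W_ℓ‖, where Diag(d) denotes the linear map y ↦ d ⊙ y and ‖·‖ is the operator norm. In particular, the expected Lipschitz constant of a masked network with 1-Lipschitz activations is contracted by the factor ∏_ℓ μ_ℓ ≤ 1 relative to the unmasked spectral-norm product bound ∏_ℓ ‖W_ℓ‖. -/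

import Mathlib

open MeasureTheory ProbabilityTheory

/-- The diagonal (coordinatewise multiplication) operator `y ↦ d ⊙ y` on
`EuclideanSpace ℝ (Fin n)`, as a continuous linear map. -/
noncomputable def diagCLM {n : ℕ} (d : EuclideanSpace ℝ (Fin n)) :
    EuclideanSpace ℝ (Fin n) →L[ℝ] EuclideanSpace ℝ (Fin n) :=
  LinearMap.toContinuousLinearMap
    { toFun := fun y => (WithLp.toLp 2 (fun i => d i * y i) : EuclideanSpace ℝ (Fin n))
      map_add' := by
        intro x y
        ext i
        simp [mul_add]
      map_smul' := by
        intro c x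
        ext i
        simp [mul_comm, mul_left_comm] }

lemma diagCLM_norm_le {n : ℕ} (d : EuclideanSpace ℝ (Fin n))
    (hd : ∀ i, 0 ≤ d i) : ‖diagCLM d‖ ≤ ⨆ i, d i := by
  set s : ℝ := ⨆ i, d i with hs
  have hs0 : 0 ≤ s := Real.iSup_nonneg hd
  refine ContinuousLinearMap.opNorm_le_bound _ hs0 fun y => ?_
  have hy : ∀ x : EuclideanSpace ℝ (Fin n), ‖x‖ = Real.sqrt (∑ i, x i ^ 2) := by
    intro x
    rw [EuclideanSpace.norm_eq]
    congr 1
    exact Finset.sum_congr rfl fun i _ => by rw [Real.norm_eq_abs, sq_abs]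
  have hdy : ∀ i, (diagCLM d y) i = d i * y i := fun _ => rfl
  rw [hy, hy]
  simp only [hdy]
  have key : (∑ i, (d i * y i) ^ 2) ≤ s ^ 2 * ∑ i, y i ^ 2 := by
    rw [Finset.mul_sum]
    refine Finset.sum_le_sum fun i _ => ?_
    have hds : d i ≤ s := le_ciSup (Set.Finite.bddAbove (Set.finite_range d)) i
    have : (d i) ^ 2 ≤ s ^ 2 := pow_le_pow_left₀ (hd i) hds 2
    calc (d i * y i) ^ 2 = d i ^ 2 * y i ^ 2 := by ring
      _ ≤ s ^ 2 * y i ^ 2 := mul_le_mul_of_nonneg_right this (sq_nonneg _)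
  calc Real.sqrt (∑ i, (d i * y i) ^ 2) ≤ Real.sqrt (s ^ 2 * ∑ i, y i ^ 2) :=
        Real.sqrt_le_sqrt key
    _ = s * Real.sqrt (∑ i, y i ^ 2) := by
        rw [Real.sqrt_mul (sq_nonneg s), Real.sqrt_sq hs0]

/-- Expectation of a product of independent, `[0,1]`-valued random variables. -/
lemma integral_prod_of_indep {Ω : Type*} [MeasureSpace Ω]
    [IsProbabilityMeasure (ℙ : Measure Ω)] {ι : Type*} {X : ι → Ω → ℝ}
    (hmeas : ∀ i, Measurable (X i))
    (hindep : iIndepFun X ℙ)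
    (hb : ∀ i ω, X i ω ∈ Set.Icc (0 : ℝ) 1) (s : Finset ι) :
    ∫ ω, ∏ i ∈ s, X i ω = ∏ i ∈ s, ∫ ω, X i ω := by
  classical
  have hint : ∀ t : Finset ι, Integrable (fun ω => ∏ i ∈ t, X i ω) ℙ := by
    intro t
    refine Integrable.mono' (integrable_const 1)
      (Finset.measurable_prod t fun i _ => hmeas i).aestronglyMeasurable
      (Filter.Eventually.of_forall fun ω => ?_)
    rw [Real.norm_eq_abs, abs_of_nonneg (Finset.prod_nonneg fun i _ => (hb i ω).1)]
    exact Finset.prod_le_one (fun i _ => (hb i ω).1) (fun i _ => (hb i ω).2)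
  induction s using Finset.induction with
  | empty => simp
  | @insert a t hi ih =>
    have hIF : ProbabilityTheory.IndepFun (X a) (∏ j ∈ t, X j) ℙ :=
      (hindep.indepFun_finsetProd_of_notMem hmeas hi).symm
    have hmul := hIF.integral_mul_eq_mul_integral
      ((hint {a}).congr (Filter.Eventually.of_forall fun ω => by simp)).aestronglyMeasurable
      ((hint t).congr (Filter.Eventually.of_forall fun ω => by
        simp [Finset.prod_apply])).aestronglyMeasurable
    calc ∫ ω, ∏ i ∈ insert a t, X i ω
        = ∫ ω, X a ω * ∏ i ∈ t, X i ω := by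
          simp [Finset.prod_insert hi]
      _ = (∫ ω, X a ω) * ∫ ω, ∏ i ∈ t, X i ω := by
          have h1 : (X a * ∏ j ∈ t, X j) = fun ω => X a ω * ∏ i ∈ t, X i ω := by
            funext ω; simp [Finset.prod_apply]
          have h2 : (∏ j ∈ t, X j) = fun ω => ∏ i ∈ t, X i ω := by
            funext ω; simp [Finset.prod_apply]
          rw [h1, h2] at hmul
          exact hmul
      _ = ∏ i ∈ insert a t, ∫ ω, X i ω := by rw [Finset.prod_insert hi, ih]

/-- Proposition 3: for independent random masks `D^{(ℓ)}` with values in `[0,1]^{n_ℓ}`,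
setting `X_ℓ = max_i D^{(ℓ)}_i` and `μ_ℓ = √(E[X_ℓ²])`, the expected product of masked
layer operator norms satisfies
`E[∏_ℓ ‖Diag(D^{(ℓ)}) ∘ W_ℓ‖] ≤ (∏_ℓ μ_ℓ) ∏_ℓ ‖W_ℓ‖`. -/
theorem expected_masked_lipschitz_contraction {Ω : Type*} [MeasureSpace Ω]
    [IsProbabilityMeasure (ℙ : Measure Ω)]
    (L : ℕ) (hL : 1 ≤ L) (n : ℕ → ℕ)
    (W : ∀ ℓ : Fin L,
      EuclideanSpace ℝ (Fin (n ℓ)) →L[ℝ] EuclideanSpace ℝ (Fin (n ((ℓ : ℕ) + 1))))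
    (D : ∀ ℓ : Fin L, Ω → EuclideanSpace ℝ (Fin (n ((ℓ : ℕ) + 1))))
    (hD01 : ∀ ℓ ω i, 0 ≤ D ℓ ω i ∧ D ℓ ω i ≤ 1)
    (hmeas : ∀ ℓ, Measurable (D ℓ))
    (hindep : iIndepFun D ℙ)
    (hL2 : ∀ ℓ, MemLp (fun ω => ⨆ i, D ℓ ω i) 2 ℙ)
    (μfac : Fin L → ℝ)
    (hμ : ∀ ℓ, μfac ℓ = Real.sqrt (∫ ω, (⨆ i, D ℓ ω i) ^ 2)) :
    (∫ ω, ∏ ℓ, ‖(diagCLM (D ℓ ω)).comp (W ℓ)‖)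
      ≤ (∏ ℓ, μfac ℓ) * ∏ ℓ, ‖W ℓ‖ := by
  classical
  set X : Fin L → Ω → ℝ := fun ℓ ω => ⨆ i, D ℓ ω i with hX
  have hXmeas : ∀ ℓ, Measurable (X ℓ) := by
    intro ℓ
    exact Measurable.iSup fun i => (measurable_pi_apply i).comp ((WithLp.measurable_ofLp 2 _).comp (hmeas ℓ))
  have hX01 : ∀ ℓ ω, X ℓ ω ∈ Set.Icc (0 : ℝ) 1 := by
    intro ℓ ω
    exact ⟨Real.iSup_nonneg fun i => (hD01 ℓ ω i).1,
      Real.iSup_le (fun i => (hD01 ℓ ω i).2) zero_le_one⟩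
  have hXindep : iIndepFun X ℙ := by
    refine hindep.comp (fun ℓ d => ⨆ i, d i) fun ℓ => ?_
    exact Measurable.iSup fun i => (measurable_pi_apply i).comp (WithLp.measurable_ofLp 2 _)
  -- pointwise bound
  have hpt : ∀ ω, (∏ ℓ, ‖(diagCLM (D ℓ ω)).comp (W ℓ)‖)
      ≤ ∏ ℓ, (X ℓ ω * ‖W ℓ‖) := by
    intro ω
    refine Finset.prod_le_prod (fun ℓ _ => norm_nonneg _) fun ℓ _ => ?_
    calc ‖(diagCLM (D ℓ ω)).comp (W ℓ)‖ ≤ ‖diagCLM (D ℓ ω)‖ * ‖W ℓ‖ :=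
          ContinuousLinearMap.opNorm_comp_le _ _
      _ ≤ X ℓ ω * ‖W ℓ‖ := mul_le_mul_of_nonneg_right
          (diagCLM_norm_le _ fun i => (hD01 ℓ ω i).1) (norm_nonneg _)
  have hXint : Integrable (fun ω => ∏ ℓ, X ℓ ω) ℙ := by
    refine Integrable.mono' (integrable_const 1)
      (Finset.measurable_prod _ fun i _ => hXmeas i).aestronglyMeasurable
      (Filter.Eventually.of_forall fun ω => ?_)
    rw [Real.norm_eq_abs, abs_of_nonneg (Finset.prod_nonneg fun i _ => (hX01 i ω).1)]
    exact Finset.prod_le_one (fun i _ => (hX01 i ω).1) (fun i _ => (hX01 i ω).2)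
  have hgint : Integrable (fun ω => ∏ ℓ, (X ℓ ω * ‖W ℓ‖)) ℙ := by
    have : (fun ω => ∏ ℓ, (X ℓ ω * ‖W ℓ‖))
        = fun ω => (∏ ℓ, X ℓ ω) * ∏ ℓ, ‖W ℓ‖ := by
      funext ω; rw [← Finset.prod_mul_distrib]
    rw [this]
    exact hXint.mul_const _
  have step1 : (∫ ω, ∏ ℓ, ‖(diagCLM (D ℓ ω)).comp (W ℓ)‖)
      ≤ ∫ ω, ∏ ℓ, (X ℓ ω * ‖W ℓ‖) := by
    refine integral_mono_of_nonneg (Filter.Eventually.of_forall fun ω =>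
      Finset.prod_nonneg fun ℓ _ => norm_nonneg _) hgint
      (Filter.Eventually.of_forall hpt)
  have step2 : (∫ ω, ∏ ℓ, (X ℓ ω * ‖W ℓ‖))
      = (∏ ℓ, ∫ ω, X ℓ ω) * ∏ ℓ, ‖W ℓ‖ := by
    have : (fun ω => ∏ ℓ, (X ℓ ω * ‖W ℓ‖))
        = fun ω => (∏ ℓ, X ℓ ω) * ∏ ℓ, ‖W ℓ‖ := by
      funext ω; rw [← Finset.prod_mul_distrib]
    rw [this, integral_mul_const,
      integral_prod_of_indep hXmeas hXindep hX01 Finset.univ]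
  have hEX : ∀ ℓ, (∫ ω, X ℓ ω) ≤ μfac ℓ := by
    intro ℓ
    have h2 : MemLp (X ℓ) 2 ℙ := hL2 ℓ
    have hvar := variance_nonneg (X ℓ) ℙ
    rw [variance_eq_sub h2] at hvar
    have hEnn : 0 ≤ ∫ ω, X ℓ ω := integral_nonneg fun ω => (hX01 ℓ ω).1
    rw [hμ ℓ]
    rw [Real.le_sqrt hEnn (integral_nonneg fun ω => sq_nonneg _)]
    have : (ℙ : Measure Ω)[X ℓ ^ 2] = ∫ ω, (⨆ i, D ℓ ω i) ^ 2 := by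
      apply integral_congr_ae
      filter_upwards with ω
      simp [hX]
    calc (∫ ω, X ℓ ω) ^ 2 = (ℙ : Measure Ω)[X ℓ] ^ 2 := rfl
      _ ≤ (ℙ : Measure Ω)[X ℓ ^ 2] := by linarith
      _ = ∫ ω, (⨆ i, D ℓ ω i) ^ 2 := this
  calc (∫ ω, ∏ ℓ, ‖(diagCLM (D ℓ ω)).comp (W ℓ)‖)
      ≤ (∏ ℓ, ∫ ω, X ℓ ω) * ∏ ℓ, ‖W ℓ‖ := step1.trans step2.le
    _ ≤ (∏ ℓ, μfac ℓ) * ∏ ℓ, ‖W ℓ‖ := by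
        refine mul_le_mul_of_nonneg_right ?_
          (Finset.prod_nonneg fun ℓ _ => norm_nonneg _)
        exact Finset.prod_le_prod
          (fun ℓ _ => integral_nonneg fun ω => (hX01 ℓ ω).1)
          (fun ℓ _ => hEX ℓ)
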